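/- Let X be an n×p real matrix, S a p×p diagonal matrix with nonzero diagonal entries, and Z = X S⁻¹. Let Z'Z = V' Γ V be an eigenvalue decomposition where V is a p×p orthogonal matrix and Γ is diagonal with diagonal entries γ₁ ≥ γ₂ ≥ … ≥ γ_p ≥ 0, let t = #{j : γ_j = γ₁}, let B = diag(γ₁ − γ_{t+1}, …, γ₁ − γ_p), let V₁ be the (p−t)×p submatrix of V consisting of its last p−t rows, and let Δ = B^{1/2} V₁ S. Then X'X + Δ'Δ = γ₁ S²; in particular, the (n + p − t)×p stacked matrix X_c = (X' Δ')' has mutually orthogonal columns. -/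

import Mathlib

open Matrix

/-- Lemma 1, active orthogonalization.
Let `X` be an `n × p` real matrix, `S = diagonal s` a `p × p` diagonal matrix with
nonzero diagonal entries, and `Z = X S⁻¹`.  Let `Zᵀ Z = Vᵀ Γ V` be an eigenvalue
decomposition with `V` orthogonal and `Γ = diagonal γ`, `γ₁ ≥ ⋯ ≥ γ_p ≥ 0`.
Let `t = #{j : γ j = γ₁}`, and let `Δ = B^{1/2} V₁ S`, i.e.
`Δ i j = √(γ₁ - γ_{t+i}) * V_{t+i, j} * s j` for `i = 0, …, p - t - 1`.
Then `Xᵀ X + Δᵀ Δ = γ₁ S²`; in particular the stacked matrix `X_c = (Xᵀ Δᵀ)ᵀ`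
has mutually orthogonal columns. -/
theorem stmt0 {n p t : ℕ} (hp : 0 < p)
    (X : Matrix (Fin n) (Fin p) ℝ) (s : Fin p → ℝ) (hs : ∀ j, s j ≠ 0)
    (V : Matrix (Fin p) (Fin p) ℝ) (γ : Fin p → ℝ)
    (hV : V ∈ Matrix.orthogonalGroup (Fin p) ℝ)
    (hmono : ∀ i j : Fin p, i ≤ j → γ j ≤ γ i)
    (hnonneg : ∀ j, 0 ≤ γ j)
    (hZ : (X * (Matrix.diagonal s)⁻¹)ᵀ * (X * (Matrix.diagonal s)⁻¹)
        = Vᵀ * Matrix.diagonal γ * V)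
    (ht : t = (Finset.univ.filter (fun j : Fin p => γ j = γ ⟨0, hp⟩)).card)
    (Δ : Matrix (Fin (p - t)) (Fin p) ℝ)
    (hΔ : ∀ (i : Fin (p - t)) (j : Fin p),
      Δ i j = Real.sqrt (γ ⟨0, hp⟩ - γ ⟨t + i, by have := i.isLt; omega⟩)
        * V ⟨t + i, by have := i.isLt; omega⟩ j * s j) :
    Xᵀ * X + Δᵀ * Δ
      = γ ⟨0, hp⟩ • (Matrix.diagonal s * Matrix.diagonal s) ∧
    ∀ j k : Fin p, j ≠ k →
      (∑ i : Fin n ⊕ Fin (p - t),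
        Matrix.fromRows X Δ i j * Matrix.fromRows X Δ i k) = 0 := by
  have hle : ∀ l : Fin p, γ l ≤ γ ⟨0, hp⟩ := fun l => hmono ⟨0, hp⟩ l (by
    simp [Fin.le_def])
  have htp : t ≤ p := by
    rw [ht]
    calc (Finset.univ.filter (fun j : Fin p => γ j = γ ⟨0, hp⟩)).card
        ≤ (Finset.univ : Finset (Fin p)).card := Finset.card_filter_le _ _
      _ = p := by simp
  have hkey : ∀ l : Fin p, (l : ℕ) < t → γ l = γ ⟨0, hp⟩ := by
    intro l hl
    by_contra h
    have hlt : γ l < γ ⟨0, hp⟩ := lt_of_le_of_ne (hle l) h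
    have hsub : (Finset.univ.filter (fun j : Fin p => γ j = γ ⟨0, hp⟩))
        ⊆ Finset.Iio l := by
      intro j hj
      simp only [Finset.mem_filter, Finset.mem_univ, true_and] at hj
      simp only [Finset.mem_Iio]
      by_contra hjl
      push_neg at hjl
      have := hmono l j hjl
      rw [hj] at this
      linarith
    have hcard := Finset.card_le_card hsub
    rw [← ht, Fin.card_Iio] at hcard
    omega
  -- V orthogonal
  have hVV : Vᵀ * V = 1 := by
    have h := (Matrix.mem_orthogonalGroup_iff' (Fin p) ℝ).mp hV
    have : star V = Vᵀ := by ext i j; simp [Matrix.star_eq_conjTranspose, Matrix.conjTranspose_apply]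
    simpa [this] using h
  have hVVjk : ∀ j k : Fin p, ∑ l : Fin p, V l j * V l k
      = if j = k then (1:ℝ) else 0 := by
    intro j k
    have : (Vᵀ * V) j k = ∑ l : Fin p, V l j * V l k := by
      simp [Matrix.mul_apply, Matrix.transpose_apply]
    rw [hVV] at this
    rw [← this, Matrix.one_apply]
  -- X'X = S (V' Γ V) S
  have hcancel : Matrix.diagonal s * Matrix.diagonal (fun j => (s j)⁻¹) = 1 := by
    have h1 : (fun i => s i * (s i)⁻¹) = fun _ : Fin p => (1:ℝ) :=
      funext fun j => mul_inv_cancel₀ (hs j)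
    rw [Matrix.diagonal_mul_diagonal, h1, Matrix.diagonal_one]
  have hcancel' : Matrix.diagonal (fun j => (s j)⁻¹) * Matrix.diagonal s = 1 := by
    have h1 : (fun i => (s i)⁻¹ * s i) = fun _ : Fin p => (1:ℝ) :=
      funext fun j => inv_mul_cancel₀ (hs j)
    rw [Matrix.diagonal_mul_diagonal, h1, Matrix.diagonal_one]
  have hinv : (Matrix.diagonal s)⁻¹ = Matrix.diagonal (fun j => (s j)⁻¹) :=
    Matrix.inv_eq_right_inv hcancel
  have hXX : Xᵀ * X = Matrix.diagonal s * (Vᵀ * Matrix.diagonal γ * V) * Matrix.diagonal s := by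
    rw [← hZ, hinv]
    rw [Matrix.transpose_mul, Matrix.diagonal_transpose]
    symm
    calc Matrix.diagonal s * (Matrix.diagonal (fun j => (s j)⁻¹) * Xᵀ *
          (X * Matrix.diagonal (fun j => (s j)⁻¹))) * Matrix.diagonal s
        = (Matrix.diagonal s * Matrix.diagonal (fun j => (s j)⁻¹)) * (Xᵀ * X) *
          (Matrix.diagonal (fun j => (s j)⁻¹) * Matrix.diagonal s) := by
          simp only [Matrix.mul_assoc]
      _ = Xᵀ * X := by rw [hcancel, hcancel', Matrix.one_mul, Matrix.mul_one]
  -- sum reindexing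
  have hsum : ∀ f : Fin p → ℝ, (∀ l : Fin p, (l : ℕ) < t → f l = 0) →
      ∑ l : Fin p, f l = ∑ i : Fin (p - t), f ⟨t + i, by have := i.isLt; omega⟩ := by
    intro f hf
    have h : p = t + (p - t) := by omega
    calc ∑ l : Fin p, f l
        = ∑ l : Fin (t + (p - t)), f (Fin.cast h.symm l) := by
          apply Fintype.sum_equiv (finCongr h)
          intro x
          congr 1
      _ = ∑ i : Fin t, f (Fin.cast h.symm (Fin.castAdd _ i))
          + ∑ i : Fin (p - t), f (Fin.cast h.symm (Fin.natAdd t i)) :=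
          Fin.sum_univ_add _
      _ = ∑ i : Fin (p - t), f ⟨t + i, by have := i.isLt; omega⟩ := by
          rw [Finset.sum_eq_zero (fun i _ => hf _ (by simp)), zero_add]
          apply Finset.sum_congr rfl
          intro i _
          congr 1
  -- Δ'Δ entries
  have hΔΔ : ∀ j k : Fin p, (Δᵀ * Δ) j k
      = ∑ l : Fin p, (γ ⟨0, hp⟩ - γ l) * (V l j * V l k) * (s j * s k) := by
    intro j k
    rw [Matrix.mul_apply]
    rw [hsum (fun l => (γ ⟨0, hp⟩ - γ l) * (V l j * V l k) * (s j * s k))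
      (fun l hl => by simp only [hkey l hl]; ring)]
    apply Finset.sum_congr rfl
    intro i _
    simp only [Matrix.transpose_apply, hΔ]
    have sqlem : ∀ (a x y u v : ℝ), 0 ≤ a →
        (Real.sqrt a * x * u) * (Real.sqrt a * y * v) = a * (x * y) * (u * v) := by
      intro a x y u v ha
      rw [show (Real.sqrt a * x * u) * (Real.sqrt a * y * v)
        = (Real.sqrt a * Real.sqrt a) * (x * y) * (u * v) by ring, Real.mul_self_sqrt ha]
    exact sqlem _ _ _ _ _ (sub_nonneg.mpr (hle _))
  -- main identity
  have hmain : Xᵀ * X + Δᵀ * Δ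
      = γ ⟨0, hp⟩ • (Matrix.diagonal s * Matrix.diagonal s) := by
    ext j k
    rw [Matrix.add_apply, hΔΔ j k, hXX]
    have hA : (Matrix.diagonal s * (Vᵀ * Matrix.diagonal γ * V) * Matrix.diagonal s) j k
        = s j * (∑ l : Fin p, V l j * (γ l * V l k)) * s k := by
      rw [Matrix.mul_diagonal, Matrix.diagonal_mul]
      congr 2
      rw [Matrix.mul_assoc, Matrix.mul_apply]
      apply Finset.sum_congr rfl
      intro l _
      rw [Matrix.transpose_apply, Matrix.diagonal_mul]
    rw [hA]
    have hexp : ∑ l : Fin p, (γ ⟨0, hp⟩ - γ l) * (V l j * V l k) * (s j * s k)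
        = ∑ l : Fin p, ((s j * s k) * (γ ⟨0, hp⟩ * (V l j * V l k))
          - (s j * s k) * (V l j * (γ l * V l k))) :=
      Finset.sum_congr rfl (fun l _ => by ring)
    rw [hexp, Finset.sum_sub_distrib, ← Finset.mul_sum, ← Finset.mul_sum, ← Finset.mul_sum,
      hVVjk]
    rw [Matrix.smul_apply, Matrix.diagonal_mul_diagonal, Matrix.diagonal_apply]
    by_cases h : j = k
    · subst h; simp; ring
    · simp [h]
      ring
  refine ⟨hmain, ?_⟩
  intro j k hjk
  have h1 := congrFun (congrFun hmain j) k
  rw [Matrix.add_apply, Matrix.smul_apply, Matrix.diagonal_mul_diagonal,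
    Matrix.diagonal_apply_ne _ hjk, smul_zero] at h1
  rw [Fintype.sum_sum_type]
  simp only [Matrix.fromRows_apply_inl, Matrix.fromRows_apply_inr]
  have h2 : (Xᵀ * X) j k = ∑ i : Fin n, X i j * X i k := by
    simp [Matrix.mul_apply, Matrix.transpose_apply]
  have h3 : (Δᵀ * Δ) j k = ∑ i : Fin (p - t), Δ i j * Δ i k := by
    simp [Matrix.mul_apply, Matrix.transpose_apply]
  rw [← h2, ← h3, h1]
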